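/- Let κ be a regular uncountable cardinal with κ^{<κ} = κ. Then there exists a κ-complete filter ℱ on κ such that Gal(ℱ, κ, κ⁺) fails. -/

import Mathlib

open Cardinal

lemma two_power_le_aux {κ : Cardinal.{0}} (hunc : ℵ₀ < κ) (hpow : κ ^< κ = κ)
    {c : Cardinal.{0}} (hc : c < κ) : 2 ^ c ≤ κ := by
  calc (2:Cardinal) ^ c ≤ κ ^ c :=
        power_le_power_right ((nat_lt_aleph0 2).le.trans hunc.le)
    _ ≤ κ ^< κ := le_powerlt κ hc
    _ = κ := hpow

lemma mk_small_subsets_le {κ : Cardinal.{0}} {β : Type} (hreg : κ.IsRegular) (hunc : ℵ₀ < κ)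
    (hpow : κ ^< κ = κ) (hβ : #β = κ) : #{s : Set β // #s < κ} ≤ κ := by
  obtain ⟨r, wo, hr⟩ := Cardinal.ord_eq β
  haveI := wo
  have hcof : Ordinal.cof (Ordinal.type r) = κ := by
    rw [← hr, hβ, hreg.cof_eq]
  have hsub : {s : Set β | #s < κ} ⊆ {s : Set β | Set.Bounded r s} := by
    intro s hs
    have hs' : #s < (Ordinal.type r).cof := by rw [hcof]; exact hs
    show Set.Bounded r s
    classical
    letI := linearOrderOfSTO r
    contrapose! hs'
    rw [Set.not_bounded_iff] at hs'
    apply Order.cof_le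
    simp_rw [IsCofinal, ← not_lt]
    exact hs'
  refine le_trans (mk_le_mk_of_subset hsub) ?_
  have heq : { s : Set β | Set.Bounded r s } = ⋃ i, 𝒫{ j | r j i } := Set.setOf_exists _
  rw [heq]
  refine le_trans mk_iUnion_le_sum_mk ?_
  refine le_trans (sum_le_mk_mul_iSup (fun i => #(𝒫{ j | r j i }))) ?_
  have h1 : ∀ i, #(𝒫{ j | r j i } : Set (Set β)) ≤ κ := by
    intro i
    rw [mk_powerset]
    apply two_power_le_aux hunc hpow
    have := card_typein_lt i (by rw [hβ] at hr ⊢; exact hr)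
    rwa [hβ] at this
  have h2 : (⨆ i, #(𝒫{ j | r j i } : Set (Set β))) ≤ κ := ciSup_le' h1
  calc #β * (⨆ i, #(𝒫{ j | r j i } : Set (Set β))) ≤ κ * κ := mul_le_mul' hβ.le h2
    _ = κ := mul_eq_self hreg.aleph0_le

def Dom (σ : Type) (κ : Cardinal.{0}) : Type :=
  {p : Set σ × Set (Set σ) // #p.1 < κ ∧ #p.2 < κ ∧ ∀ y ∈ p.2, y ⊆ p.1}

def Tset {σ : Type} {κ : Cardinal.{0}} (i : ∀ p : Dom σ κ, ↥p.val.2 → σ)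
    (p : Dom σ κ) : Set (σ × σ) :=
  {q : σ × σ | ∃ y : ↥p.val.2, i p y = q.1 ∧ q.2 ∈ (y : Set σ)}

def Rset {σ : Type} {κ : Cardinal.{0}} (i : ∀ p : Dom σ κ, ↥p.val.2 → σ)
    (p : Dom σ κ) : Set σ :=
  Set.range (fun z : ↥p.val.2 => i p z)

lemma tset_card {σ : Type} {κ : Cardinal.{0}} (hreg : κ.IsRegular)
    (i : ∀ p : Dom σ κ, ↥p.val.2 → σ) (p : Dom σ κ) : #(Tset i p) < κ := by
  classical
  have hinj : Function.Injective (fun q : ↥(Tset i p) =>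
      (⟨q.2.choose, ⟨q.1.2, q.2.choose_spec.2⟩⟩ : Σ y : ↥p.val.2, ↥(y : Set σ))) := by
    intro a b h
    obtain ⟨h1, h2⟩ := Sigma.mk.inj_iff.mp h
    have ha := a.2.choose_spec.1
    have hb := b.2.choose_spec.1
    have hsnd : a.1.2 = b.1.2 := by
      have := (Subtype.heq_iff_coe_eq (fun x => by rw [h1])).mp h2
      simpa using this
    apply Subtype.ext
    refine Prod.ext ?_ hsnd
    rw [← ha, ← hb, h1]
  refine lt_of_le_of_lt (mk_le_of_injective hinj) ?_
  rw [mk_sigma]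
  refine sum_lt_of_isRegular hreg p.prop.2.1 ?_
  intro y
  exact lt_of_le_of_lt (mk_le_mk_of_subset (p.prop.2.2 y y.2)) p.prop.1

lemma dom_decode {σ : Type} {κ : Cardinal.{0}} (i : ∀ p : Dom σ κ, ↥p.val.2 → σ)
    (hi : ∀ p, Function.Injective (i p)) (p : Dom σ κ) :
    p.val.2 = {y : Set σ | ∃ a ∈ Rset i p, y = {b : σ | (a, b) ∈ Tset i p}} := by
  ext y
  constructor
  · intro hy
    refine ⟨i p ⟨y, hy⟩, ⟨⟨y, hy⟩, rfl⟩, ?_⟩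
    ext b
    simp only [Tset, Set.mem_setOf_eq]
    constructor
    · intro hb
      exact ⟨⟨y, hy⟩, rfl, hb⟩
    · rintro ⟨y', hy', hb⟩
      have hyy : y' = ⟨y, hy⟩ := hi p hy'
      rw [hyy] at hb
      exact hb
  · rintro ⟨a, ⟨z, rfl⟩, rfl⟩
    have hzz : {b : σ | (i p z, b) ∈ Tset i p} = (z : Set σ) := by
      ext b
      simp only [Tset, Set.mem_setOf_eq]
      constructor
      · rintro ⟨y', hy', hb⟩
        have : y' = z := hi p hy'
        rwa [this] at hb
      · intro hb
        exact ⟨z, rfl, hb⟩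
    rw [hzz]
    exact z.2

lemma mk_dom_le {σ : Type} {κ : Cardinal.{0}} (hreg : κ.IsRegular) (hunc : ℵ₀ < κ)
    (hpow : κ ^< κ = κ) (hσ : #σ = κ) : #(Dom σ κ) ≤ κ := by
  classical
  have hκσ : #(σ × σ) = κ := by
    rw [mk_prod]
    simp only [Cardinal.lift_id]
    rw [hσ, mul_eq_self hreg.aleph0_le]
  have hb1 : #{s : Set σ // #s < κ} ≤ κ := mk_small_subsets_le hreg hunc hpow hσ
  have hb2 : #{t : Set (σ × σ) // #t < κ} ≤ κ := mk_small_subsets_le hreg hunc hpow hκσ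
  have hemb : ∀ p : Dom σ κ, Nonempty (↥p.val.2 ↪ σ) := by
    intro p
    rw [← Cardinal.le_def, hσ]
    exact (p.prop.2.1).le
  let i : ∀ p : Dom σ κ, ↥p.val.2 → σ := fun p => ⇑(hemb p).some
  have hi : ∀ p, Function.Injective (i p) := fun p => (hemb p).some.injective
  let enc : Dom σ κ → {s : Set σ // #s < κ} × {s : Set σ // #s < κ} × {t : Set (σ × σ) // #t < κ} :=
    fun p => ⟨⟨p.val.1, p.prop.1⟩,
      ⟨Rset i p, mk_range_le.trans_lt p.prop.2.1⟩,
      ⟨Tset i p, tset_card hreg i p⟩⟩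
  have hencinj : Function.Injective enc := by
    intro p p' h
    simp only [enc, Prod.mk.injEq, Subtype.mk.injEq] at h
    obtain ⟨h1, h2, h3⟩ := h
    apply Subtype.ext
    refine Prod.ext h1 ?_
    rw [dom_decode i hi p, dom_decode i hi p', (by exact congrArg Subtype.val h2 : Rset i p = Rset i p'), h3]
  refine le_trans (mk_le_of_injective hencinj) ?_
  rw [mk_prod, mk_prod]
  simp only [Cardinal.lift_id]
  calc #{s : Set σ // #s < κ} * (#{s : Set σ // #s < κ} * #{t : Set (σ × σ) // #t < κ})
      ≤ κ * (κ * κ) := mul_le_mul' hb1 (mul_le_mul' hb1 hb2)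
    _ = κ := by rw [mul_eq_self hreg.aleph0_le, mul_eq_self hreg.aleph0_le]

def Ax {σ : Type} (κ : Cardinal.{0}) (X : Set σ) : Set (Dom σ κ) :=
  {p | X ∩ p.val.1 ∈ p.val.2}

lemma indep {σ : Type} {κ : Cardinal.{0}} (hunc : ℵ₀ < κ)
    (t : Set (Set σ)) (ht : #t < κ) {Y : Set σ} (hY : Y ∉ t) :
    ∃ p : Dom σ κ, (∀ X ∈ t, p ∈ Ax κ X) ∧ p ∉ Ax κ Y := by
  classical
  have hc : ∀ X : ↥t, ∃ c : σ, c ∈ ((X : Set σ) \ Y) ∪ (Y \ (X : Set σ)) := by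
    intro X
    by_contra h
    push_neg at h
    apply hY
    have hXY : (X : Set σ) = Y := by
      ext b
      constructor <;> intro hb <;> by_contra hb'
      · exact h b (Or.inl ⟨hb, hb'⟩)
      · exact h b (Or.inr ⟨hb, hb'⟩)
    rw [← hXY]
    exact X.2
  choose c hc using hc
  set x : Set σ := Set.range c with hxdef
  set F : Set (Set σ) := Set.range (fun X : ↥t => (X : Set σ) ∩ x) with hFdef
  have hx : #x < κ := mk_range_le.trans_lt ht
  have hF : #F < κ := mk_range_le.trans_lt ht
  have hsub : ∀ y ∈ F, y ⊆ x := by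
    rintro y ⟨X, rfl⟩
    exact Set.inter_subset_right
  refine ⟨⟨(x, F), hx, hF, hsub⟩, ?_, ?_⟩
  · intro X hX
    exact ⟨⟨X, hX⟩, rfl⟩
  · intro hmem
    obtain ⟨X, hXe0⟩ := hmem
    have hXe : (X : Set σ) ∩ x = Y ∩ x := hXe0
    have hcx : c X ∈ x := ⟨X, rfl⟩
    rcases hc X with h | h
    · have hmm : c X ∈ (X : Set σ) ∩ x := ⟨h.1, hcx⟩
      rw [hXe] at hmm
      exact h.2 hmm.1
    · have hmm : c X ∈ Y ∩ x := ⟨h.1, hcx⟩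
      rw [← hXe] at hmm
      exact h.2 hmm.1

/-- Galvin's property for a (set-represented) filter. -/
def GalSet {σ : Type} (W : Set (Set σ)) (κ lam : Cardinal.{0}) : Prop :=
  ∀ (ι : Type) (A : ι → Set σ), #ι = lam → (∀ i, A i ∈ W) →
    ∃ I : Set ι, #(↥I) = κ ∧ (⋂ i ∈ I, A i) ∈ W

theorem stmt7 {σ : Type} {κ : Cardinal.{0}} (hreg : κ.IsRegular) (hunc : ℵ₀ < κ)
    (hpow : κ ^< κ = κ) (hσ : #σ = κ) :
    ∃ F : Set (Set σ),
      Set.univ ∈ F ∧ ∅ ∉ F ∧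
      (∀ X ∈ F, ∀ Y : Set σ, X ⊆ Y → Y ∈ F) ∧
      (∀ S : Set (Set σ), S ⊆ F → #(↥S) < κ → ⋂₀ S ∈ F) ∧
      ¬ GalSet F κ (Order.succ κ) := by
  classical
  obtain ⟨e⟩ : Nonempty (Dom σ κ ↪ σ) := by
    rw [← Cardinal.le_def, hσ]
    exact mk_dom_le hreg hunc hpow hσ
  have hzero : (0 : Cardinal) < κ := aleph0_pos.trans hunc
  have hone : (1 : Cardinal) < κ := one_lt_aleph0.trans hunc
  -- the default point of the domain
  have hp0 : ∃ p0 : Dom σ κ, p0.val.1 = (∅ : Set σ) ∧ p0.val.2 = ({∅} : Set (Set σ)) := by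
    refine ⟨⟨(∅, {∅}), ?_, ?_, ?_⟩, rfl, rfl⟩
    · simpa using hzero
    · simpa using hone
    · intro y hy
      simp only [Set.mem_singleton_iff] at hy
      simp [hy]
  obtain ⟨p0, hp01, hp02⟩ := hp0
  have hp0mem : ∀ X : Set σ, p0 ∈ Ax κ X := by
    intro X
    show X ∩ p0.val.1 ∈ p0.val.2
    rw [hp01, hp02]
    simp
  refine ⟨{Y : Set σ | ∃ t : Set (Set σ), #t < κ ∧ (⋂ X ∈ t, Ax κ X) ⊆ e ⁻¹' Y}, ?_, ?_, ?_, ?_, ?_⟩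
  · exact ⟨∅, by simpa using hzero, by simp⟩
  · rintro ⟨t, ht, hsub⟩
    have : p0 ∈ ⋂ X ∈ t, Ax κ X := Set.mem_iInter₂.mpr fun X _ => hp0mem X
    simpa using hsub this
  · rintro X ⟨t, ht, hs⟩ Y hXY
    exact ⟨t, ht, hs.trans (Set.preimage_mono hXY)⟩
  · intro S hS hcard
    choose t ht hsub using fun Y : ↥S => hS Y.2
    refine ⟨⋃ Y : ↥S, t Y, ?_, ?_⟩
    · refine lt_of_le_of_lt mk_iUnion_le_sum_mk ?_
      exact sum_lt_of_isRegular hreg hcard fun Y => ht Y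
    · intro p hp
      simp only [Set.mem_preimage, Set.mem_sInter]
      intro Y hY
      have hp' : p ∈ ⋂ X ∈ t ⟨Y, hY⟩, Ax κ X := by
        refine Set.mem_iInter₂.mpr fun X hX => ?_
        exact Set.mem_iInter₂.mp hp X (Set.mem_iUnion.mpr ⟨⟨Y, hY⟩, hX⟩)
      exact hsub ⟨Y, hY⟩ hp'
  · intro hGal
    have hg : Nonempty ((Order.succ κ).out ↪ Set σ) := by
      rw [← Cardinal.le_def, mk_out, mk_set, hσ]
      exact Order.succ_le_of_lt (cantor κ)
    obtain ⟨g⟩ := hg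
    obtain ⟨I, hI, hmem⟩ := hGal (Order.succ κ).out
      (fun i => e '' (Ax κ (g i)) ∪ (Set.range e)ᶜ) (mk_out _) (by
        intro i
        refine ⟨{g i}, by simpa using hone, ?_⟩
        intro p hp
        have : p ∈ Ax κ (g i) := by simpa using hp
        exact Or.inl (Set.mem_image_of_mem e this))
    obtain ⟨t, ht, hsub⟩ := hmem
    have hex : ∃ i ∈ I, g i ∉ t := by
      by_contra h
      push_neg at h
      have hinj : Function.Injective (fun i : ↥I => (⟨g i, h i i.2⟩ : ↥t)) := by
        intro a b hab
        simp only [Subtype.mk.injEq] at hab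
        exact Subtype.ext (g.injective hab)
      have := mk_le_of_injective hinj
      rw [hI] at this
      exact absurd (this.trans_lt ht) (lt_irrefl κ)
    obtain ⟨i, hiI, hgi⟩ := hex
    obtain ⟨p, hp1, hp2⟩ := indep (κ := κ) hunc t ht hgi
    have hpmem : p ∈ ⋂ X ∈ t, Ax κ X := Set.mem_iInter₂.mpr hp1
    have := hsub hpmem
    have hAi := Set.mem_iInter₂.mp this i hiI
    rcases hAi with h | h
    · obtain ⟨q, hq, heq⟩ := h
      rw [e.injective heq] at hq
      exact hp2 hq
    · exact h ⟨p, rfl⟩
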